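/- For every integer K ≥ 2 and ε > 0, (1/V_ε)^{ε/K}/(K+ε) < 1/(1+ε), where V_ε = (1/ε)^{K-1}Γ(1/ε)^K/(K·Γ(K/ε)) is the volume of {x ∈ [0,1]^K : Σ x_k^ε ≤ 1}. -/

import Mathlib

open Real Filter Finset

noncomputable def fseq (n : ℕ) (t : ℝ) : ℝ :=
  (1 + t) * Real.log n + Real.log (Nat.factorial n) - (∑ j ∈ Finset.range (n + 1), Real.log (1 + t + j))
    - t * Real.log (1 + t)

noncomputable def fseq' (n : ℕ) (t : ℝ) : ℝ :=
  Real.log n - (∑ j ∈ Finset.range (n + 1), (1 + t + (j : ℝ))⁻¹)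
    - (Real.log (1 + t) + t * (1 + t)⁻¹)

noncomputable def fseq'' (n : ℕ) (t : ℝ) : ℝ :=
  (∑ j ∈ Finset.range (n + 1), ((1 + t + (j : ℝ)) ^ 2)⁻¹) - 2 * (1 + t)⁻¹ + t * ((1 + t) ^ 2)⁻¹

lemma aff_hasDerivAt (j : ℕ) (t : ℝ) : HasDerivAt (fun t : ℝ => 1 + t + (j : ℝ)) 1 t := by
  simpa using ((hasDerivAt_id t).const_add 1).add_const (j : ℝ)

lemma hasDerivAt_fseq (n : ℕ) (t : ℝ) (ht : -1 < t) :
    HasDerivAt (fseq n) (fseq' n t) t := by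
  have h1 : (0:ℝ) < 1 + t := by linarith
  have hlog : HasDerivAt (fun t : ℝ => Real.log (1 + t)) ((1 + t)⁻¹) t := by
    simpa [Function.comp_def] using (Real.hasDerivAt_log (ne_of_gt h1)).comp t ((hasDerivAt_id t).const_add 1)
  have hsum : HasDerivAt (fun t : ℝ => ∑ j ∈ Finset.range (n + 1), Real.log (1 + t + j))
      (∑ j ∈ Finset.range (n + 1), (1 + t + (j : ℝ))⁻¹) t := by
    refine HasDerivAt.fun_sum fun j _ => ?_
    have hj : (0:ℝ) < 1 + t + j := by positivity
    simpa [Function.comp_def] using (Real.hasDerivAt_log (ne_of_gt hj)).comp t (aff_hasDerivAt j t)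
  have hA : HasDerivAt (fun t : ℝ => (1 + t) * Real.log n) (Real.log n) t := by
    simpa using (((hasDerivAt_id t).const_add 1).mul_const (Real.log n))
  have hB : HasDerivAt (fun t : ℝ => t * Real.log (1 + t))
      (Real.log (1 + t) + t * (1 + t)⁻¹) t := by
    simpa using (hasDerivAt_id t).fun_mul hlog
  have := ((hA.add_const (Real.log (Nat.factorial n))).sub hsum).sub hB
  exact this

lemma hasDerivAt_fseq' (n : ℕ) (t : ℝ) (ht : -1 < t) :
    HasDerivAt (fseq' n) (fseq'' n t) t := by
  have h1 : (0:ℝ) < 1 + t := by linarith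
  have hlog : HasDerivAt (fun t : ℝ => Real.log (1 + t)) ((1 + t)⁻¹) t := by
    simpa [Function.comp_def] using (Real.hasDerivAt_log (ne_of_gt h1)).comp t ((hasDerivAt_id t).const_add 1)
  have hinv : HasDerivAt (fun t : ℝ => (1 + t)⁻¹) (-1 / (1 + t) ^ 2) t := by
    simpa [Pi.inv_def] using ((hasDerivAt_id t).const_add 1).inv (ne_of_gt h1)
  have hsum : HasDerivAt (fun t : ℝ => ∑ j ∈ Finset.range (n + 1), (1 + t + (j:ℝ))⁻¹)
      (∑ j ∈ Finset.range (n + 1), -1 / (1 + t + (j:ℝ)) ^ 2) t := by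
    refine HasDerivAt.fun_sum fun j _ => ?_
    have hj : (0:ℝ) < 1 + t + j := by positivity
    simpa [Pi.inv_def] using (aff_hasDerivAt j t).inv (ne_of_gt hj)
  have hB : HasDerivAt (fun t : ℝ => t * (1 + t)⁻¹)
      ((1 + t)⁻¹ + t * (-1 / (1 + t) ^ 2)) t := by
    simpa using (hasDerivAt_id t).fun_mul hinv
  have := ((hasDerivAt_const t (Real.log n)).sub hsum).sub (hlog.add hB)
  refine this.congr_deriv ?_
  have hs : ∑ j ∈ Finset.range (n + 1), -1 / (1 + t + (j:ℝ)) ^ 2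
      = -∑ j ∈ Finset.range (n + 1), ((1 + t + (j:ℝ)) ^ 2)⁻¹ := by
    rw [← Finset.sum_neg_distrib]
    exact Finset.sum_congr rfl fun j _ => by rw [neg_div, one_div]
  rw [hs]
  simp only [fseq'']
  have h2 : ((1+t)^2 : ℝ) ≠ 0 := by positivity
  field_simp
  ring

lemma sum_inv_sq_bound (n : ℕ) (t : ℝ) (ht : 0 ≤ t) :
    (∑ j ∈ Finset.range (n + 1), ((1 + t + (j : ℝ)) ^ 2)⁻¹)
      ≤ ((1 + t) ^ 2)⁻¹ + (t + 3/2)⁻¹ - (t + (n : ℝ) + 3/2)⁻¹ := by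
  induction n with
  | zero => simp
  | succ n ih =>
    rw [Finset.sum_range_succ]
    have key : ((1 + t + ((n+1 : ℕ) : ℝ)) ^ 2)⁻¹
        ≤ (t + (n : ℝ) + 3/2)⁻¹ - (t + ((n+1 : ℕ) : ℝ) + 3/2)⁻¹ := by
      push_cast
      have h1 : (0:ℝ) < t + n + 3/2 := by positivity
      have h2 : (0:ℝ) < t + n + 1 + 3/2 := by positivity
      have heq : (t + (n:ℝ) + 3/2)⁻¹ - (t + (n:ℝ) + 1 + 3/2)⁻¹
          = ((t + n + 3/2) * (t + n + 1 + 3/2))⁻¹ := by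
        rw [inv_sub_inv (ne_of_gt h1) (ne_of_gt h2)]
        ring_nf
      have heq2 : t + ((n:ℝ) + 1) + 3/2 = t + (n:ℝ) + 1 + 3/2 := by ring
      rw [heq2, heq]
      apply inv_anti₀ (by positivity)
      nlinarith [sq_nonneg (t + (n:ℝ))]
    push_cast at key ⊢
    linarith

lemma fseq''_le (n : ℕ) (t : ℝ) (ht : 0 ≤ t) :
    fseq'' n t ≤ -(2 * (1 + t) * (t + 3/2))⁻¹ := by
  have hs := sum_inv_sq_bound n t ht
  have h3 : (0:ℝ) < (t + (n:ℝ) + 3/2)⁻¹ := by positivity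
  have h1 : (0:ℝ) < 1 + t := by linarith
  have h2 : (0:ℝ) < t + 3/2 := by linarith
  have hE : ((1+t)^2)⁻¹ + (t+3/2)⁻¹ - 2*(1+t)⁻¹ + t*((1+t)^2)⁻¹
      = -(2*(1+t)*(t+3/2))⁻¹ := by
    field_simp
    ring
  simp only [fseq'']
  linarith

lemma concave_gap {R : ℝ} {g : ℝ → ℝ} (hconc : ConcaveOn ℝ (Set.Icc 0 R) g)
    (a b : ℝ) (ha : 0 < a) (hb : 0 < b) (hR : a + b = R) :
    g 0 + g R ≤ g a + g b := by
  subst hR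
  set R := a + b with hRdef
  have hRpos : 0 < R := by positivity
  have h0 : (0:ℝ) ∈ Set.Icc (0:ℝ) R := by constructor <;> linarith
  have hr : R ∈ Set.Icc (0:ℝ) R := by constructor <;> linarith
  have hba : (0:ℝ) ≤ b / R := by positivity
  have hab : (0:ℝ) ≤ a / R := by positivity
  have hsum : b / R + a / R = 1 := by rw [hRdef]; field_simp; try ring
  have hsum' : a / R + b / R = 1 := by rw [hRdef]; field_simp; try ring
  have hga := hconc.2 h0 hr hba hab hsum
  have hgb := hconc.2 h0 hr hab hba hsum'
  rw [smul_eq_mul, smul_eq_mul, smul_eq_mul, smul_eq_mul, mul_zero, zero_add,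
    div_mul_cancel₀ _ (ne_of_gt hRpos)] at hga
  rw [smul_eq_mul, smul_eq_mul, smul_eq_mul, smul_eq_mul, mul_zero, zero_add,
    div_mul_cancel₀ _ (ne_of_gt hRpos)] at hgb
  have hgRa : (b / R) * g 0 + (a / R) * g R ≤ g a := hga
  have hgRb : (a / R) * g 0 + (b / R) * g R ≤ g b := hgb
  have := add_le_add hgRa hgRb
  have hcomb : (b / R) * g 0 + (a / R) * g R + ((a / R) * g 0 + (b / R) * g R)
      = g 0 + g R := by
    field_simp
    try rw [hRdef]
    try ring
  linarith [hcomb ▸ this]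

lemma fseq_gap (n : ℕ) (a b : ℝ) (ha : 0 < a) (hb : 0 < b) :
    (2 * (1 + (a+b)) * ((a+b) + 3/2))⁻¹ * a * b
      ≤ fseq n a + fseq n b - fseq n (a + b) - fseq n 0 := by
  set R := a + b with hRdef
  have hRpos : 0 < R := by positivity
  set c : ℝ := (2 * (1 + R) * (R + 3/2))⁻¹ with hc
  have hcpos : 0 < c := by rw [hc]; positivity
  set g : ℝ → ℝ := fun t => fseq n t + c * t ^ 2 / 2 with hg
  have hd1 : ∀ t ∈ Set.Icc (0:ℝ) R, HasDerivAt g (fseq' n t + c * t) t := by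
    intro t htm
    have ht : -1 < t := by have := htm.1; linarith
    have : HasDerivAt (fun t : ℝ => c * t ^ 2 / 2) (c * t) t := by
      have := ((hasDerivAt_pow 2 t).const_mul c).div_const 2
      refine this.congr_deriv ?_
      ring
    exact (hasDerivAt_fseq n t ht).add this
  have hd2 : ∀ t ∈ Set.Icc (0:ℝ) R, HasDerivAt (fun t => fseq' n t + c * t) (fseq'' n t + c) t := by
    intro t htm
    have ht : -1 < t := by have := htm.1; linarith
    exact (hasDerivAt_fseq' n t ht).add (by simpa using (hasDerivAt_id t).const_mul c)
  have hconc : ConcaveOn ℝ (Set.Icc 0 R) g := by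
    apply concaveOn_of_hasDerivWithinAt2_nonpos (convex_Icc 0 R)
      (f' := fun t => fseq' n t + c * t) (f'' := fun t => fseq'' n t + c)
    · exact fun t htm => ((hd1 t htm).continuousAt).continuousWithinAt
    · intro x hx
      rw [interior_Icc] at hx
      exact (hd1 x ⟨le_of_lt hx.1, le_of_lt hx.2⟩).hasDerivWithinAt
    · intro x hx
      rw [interior_Icc] at hx
      exact (hd2 x ⟨le_of_lt hx.1, le_of_lt hx.2⟩).hasDerivWithinAt
    · intro x hx
      rw [interior_Icc] at hx
      have hb1 := fseq''_le n x (le_of_lt hx.1)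
      have hmono : c ≤ (2 * (1 + x) * (x + 3/2))⁻¹ := by
        rw [hc]
        apply inv_anti₀ (by nlinarith [hx.1])
        nlinarith [hx.1, hx.2, hRpos]
      linarith
  have hkey := concave_gap hconc a b ha hb rfl
  have hexp : g 0 + g R ≤ g a + g b := hkey
  simp only [hg] at hexp
  have hR2 : R ^ 2 = a ^ 2 + 2 * a * b + b ^ 2 := by rw [hRdef]; ring
  nlinarith [hexp]

noncomputable def Hfun (t : ℝ) : ℝ := Real.log (Real.Gamma (1 + t)) - t * Real.log (1 + t)

lemma fseq_eq (n : ℕ) (hn : 1 ≤ n) (t : ℝ) (ht : 0 ≤ t) :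
    fseq n t = Real.log (Real.GammaSeq (1 + t) n) - t * Real.log (1 + t) := by
  have hnp : (0:ℝ) < n := by exact_mod_cast hn
  have h1 : (0:ℝ) < 1 + t := by linarith
  have hprod : ∀ j ∈ Finset.range (n + 1), (1 + t + (j:ℝ)) ≠ 0 := by
    intro j _; positivity
  have hprodpos : (0:ℝ) < ∏ j ∈ Finset.range (n + 1), (1 + t + (j:ℝ)) :=
    Finset.prod_pos fun j _ => by positivity
  have hfac : (0:ℝ) < (Nat.factorial n : ℝ) := by exact_mod_cast Nat.factorial_pos n
  have hrpow : (0:ℝ) < (n:ℝ) ^ (1 + t) := Real.rpow_pos_of_pos hnp _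
  rw [Real.GammaSeq]
  rw [Real.log_div (by positivity) (ne_of_gt hprodpos), Real.log_mul (ne_of_gt hrpow)
    (ne_of_gt hfac), Real.log_rpow hnp, Real.log_prod hprod]
  simp only [fseq]
  try ring

lemma tendsto_fseq (t : ℝ) (ht : 0 ≤ t) :
    Filter.Tendsto (fun n => fseq n t) Filter.atTop (nhds (Hfun t)) := by
  have h1 : (0:ℝ) < 1 + t := by linarith
  have hG : 0 < Real.Gamma (1 + t) := Real.Gamma_pos_of_pos h1
  have h := Real.GammaSeq_tendsto_Gamma (1 + t)
  have hlog : Filter.Tendsto (fun n => Real.log (Real.GammaSeq (1 + t) n)) Filter.atTop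
      (nhds (Real.log (Real.Gamma (1 + t)))) :=
    ((Real.continuousAt_log (ne_of_gt hG)).tendsto).comp h
  have := hlog.sub_const (t * Real.log (1 + t))
  refine this.congr' ?_
  filter_upwards [Filter.eventually_ge_atTop 1] with n hn
  exact (fseq_eq n hn t ht).symm

lemma Hfun_subadd (a b : ℝ) (ha : 0 < a) (hb : 0 < b) :
    Hfun (a + b) < Hfun a + Hfun b := by
  have hH0 : Hfun 0 = 0 := by simp [Hfun, Real.Gamma_one]
  have hc : (0:ℝ) < (2 * (1 + (a+b)) * ((a+b) + 3/2))⁻¹ * a * b := by positivity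
  have hT : Filter.Tendsto (fun n => fseq n a + fseq n b - fseq n (a + b) - fseq n 0)
      Filter.atTop (nhds (Hfun a + Hfun b - Hfun (a + b) - Hfun 0)) :=
    (((tendsto_fseq a ha.le).add (tendsto_fseq b hb.le)).sub
      (tendsto_fseq (a + b) (by positivity))).sub (tendsto_fseq 0 le_rfl)
  have hge : (2 * (1 + (a+b)) * ((a+b) + 3/2))⁻¹ * a * b
      ≤ Hfun a + Hfun b - Hfun (a + b) - Hfun 0 :=
    ge_of_tendsto hT (Filter.Eventually.of_forall fun n => fseq_gap n a b ha hb)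
  rw [hH0] at hge
  linarith

lemma Hfun_nat_mul (K : ℕ) (hK : 2 ≤ K) (t : ℝ) (ht : 0 < t) :
    Hfun (K * t) < K * Hfun t := by
  induction K, hK using Nat.le_induction with
  | base =>
    push_cast
    have := Hfun_subadd t t ht ht
    have h2 : (2:ℝ) * t = t + t := by ring
    rw [h2]
    linarith
  | succ n hn ih =>
    have h1 : ((n+1 : ℕ) : ℝ) * t = (n:ℝ) * t + t := by push_cast; ring
    have hnt : 0 < (n:ℝ) * t := by
      have : (0:ℝ) < n := by exact_mod_cast Nat.lt_of_lt_of_le (by norm_num) hn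
      positivity
    have h2 := Hfun_subadd ((n:ℝ) * t) t hnt ht
    rw [h1]
    push_cast
    linarith

/-- For K ≥ 2 and ε > 0, (1/V_ε)^{ε/K}/(K+ε) < 1/(1+ε) with
V_ε = (1/ε)^{K-1} Γ(1/ε)^K / (K Γ(K/ε)). -/
theorem stmt13 (K : ℕ) (hK : 2 ≤ K) (ε : ℝ) (hε : 0 < ε) :
    (1 / ((1/ε) ^ (K - 1) * Real.Gamma (1/ε) ^ K / (K * Real.Gamma (K/ε)))) ^ (ε / K)
        / (K + ε)
      < 1 / (1 + ε) := by
  set t : ℝ := 1/ε with htdef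
  have ht : 0 < t := by positivity
  have hεt : ε * t = 1 := by rw [htdef]; field_simp
  have hKpos : (0:ℝ) < K := by exact_mod_cast Nat.lt_of_lt_of_le (by norm_num) hK
  have hKne : (K:ℝ) ≠ 0 := ne_of_gt hKpos
  have hKt : 0 < (K:ℝ) * t := by positivity
  have hKdiv : (K:ℝ)/ε = (K:ℝ) * t := by rw [htdef]; field_simp
  have hG1 : 0 < Real.Gamma t := Real.Gamma_pos_of_pos ht
  have hG2 : 0 < Real.Gamma ((K:ℝ) * t) := Real.Gamma_pos_of_pos hKt
  have hG3 : 0 < Real.Gamma (1 + t) := Real.Gamma_pos_of_pos (by linarith)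
  have hG4 : 0 < Real.Gamma (1 + (K:ℝ) * t) := Real.Gamma_pos_of_pos (by linarith)
  have hGt1 : Real.Gamma (1 + t) = t * Real.Gamma t := by
    rw [add_comm]; exact Real.Gamma_add_one (ne_of_gt ht)
  have hGt2 : Real.Gamma (1 + (K:ℝ) * t) = ((K:ℝ) * t) * Real.Gamma ((K:ℝ) * t) := by
    rw [add_comm]; exact Real.Gamma_add_one (ne_of_gt hKt)
  -- identify V
  have hV : (1/ε) ^ (K - 1) * Real.Gamma (1/ε) ^ K / ((K:ℝ) * Real.Gamma ((K:ℝ)/ε))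
      = Real.Gamma (1 + t) ^ K / Real.Gamma (1 + (K:ℝ) * t) := by
    rw [hKdiv, hGt1, hGt2, ← htdef]
    rw [mul_pow]
    have hKsucc : K = (K - 1) + 1 := (Nat.succ_pred_eq_of_pos (by omega)).symm
    rw [hKsucc, pow_succ t (K-1)]
    have : K - 1 + 1 - 1 = K - 1 := by omega
    rw [this]
    field_simp
  rw [hV]
  set V : ℝ := Real.Gamma (1 + t) ^ K / Real.Gamma (1 + (K:ℝ) * t) with hVdef
  have hVpos : 0 < V := by positivity
  have hBpos : (0:ℝ) < (1 + (K:ℝ) * t) / (1 + t) := by positivity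
  -- the key log inequality
  have hmul := Hfun_nat_mul K hK t ht
  simp only [Hfun] at hmul
  have hlogA : Real.log (1/V) = Real.log (Real.Gamma (1 + (K:ℝ) * t))
      - (K:ℝ) * Real.log (Real.Gamma (1 + t)) := by
    rw [hVdef, one_div, Real.log_inv,
      Real.log_div (by positivity) (ne_of_gt hG4), Real.log_pow]
    ring
  have hkey : (ε / K) * Real.log (1/V)
      < Real.log (1 + (K:ℝ) * t) - Real.log (1 + t) := by
    rw [hlogA]
    set Y : ℝ := Real.log (1 + (K:ℝ) * t) - Real.log (1 + t) with hY
    have h4 : Real.log (Real.Gamma (1 + (K:ℝ) * t))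
        - (K:ℝ) * Real.log (Real.Gamma (1 + t)) < ((K:ℝ) * t) * Y := by
      rw [hY]; nlinarith [hmul]
    have h5 := mul_lt_mul_of_pos_left h4 (show (0:ℝ) < ε / K by positivity)
    have h6 : ε / (K:ℝ) * (((K:ℝ) * t) * Y) = (ε * t) * Y := by field_simp
    rw [h6, hεt, one_mul] at h5
    exact h5
  -- convert to the stated form
  have hkey2 : Real.log (1/V) * (ε / (K:ℝ)) < Real.log ((1 + (K:ℝ) * t) / (1 + t)) := by
    have hrhs : Real.log ((1 + (K:ℝ) * t) / (1 + t))
        = Real.log (1 + (K:ℝ) * t) - Real.log (1 + t) :=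
      Real.log_div (by positivity) (by positivity)
    rw [hrhs]
    calc Real.log (1/V) * (ε / (K:ℝ)) = ε / (K:ℝ) * Real.log (1/V) := by ring
      _ < _ := hkey
  have hrpow : (1/V) ^ (ε / (K:ℝ)) < (1 + (K:ℝ) * t) / (1 + t) := by
    rw [Real.rpow_def_of_pos (by positivity), ← Real.exp_log hBpos]
    exact Real.exp_lt_exp.mpr hkey2
  have hBeq : (1 + (K:ℝ) * t) / (1 + t) = ((K:ℝ) + ε) / (1 + ε) := by
    rw [htdef]
    field_simp
    ring
  rw [hBeq] at hrpow
  rw [div_lt_div_iff₀ (by positivity) (by positivity)]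
  rw [lt_div_iff₀ (by positivity)] at hrpow
  nlinarith [hrpow]
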